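/- Let γ : ℝ₊ → ℝ₊ be an increasing convex function with γ(0) = 0 and right derivative γ'₊(0) = 0, satisfying γ(u+v) ≤ C(γ(u) + γ(v)) for some constant C and all u, v ≥ 0. Then r := sup_{x>0} x γ'₊(x) / γ(x) satisfies 1 < r < ∞. -/

import Mathlib

open Set

/-- Membership helper. -/
lemma aux_mem_diff {c y : ℝ} (h1 : 0 ≤ y) (h2 : y ≠ c) : y ∈ Set.Ici (0:ℝ) \ {c} := by
  simp only [Set.mem_diff, Set.mem_Ici, Set.mem_singleton_iff]
  exact ⟨h1, h2⟩

/-- Existence of the right derivative of a convex function, given that the slopes to the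
right are bounded below. -/
lemma aux_hasDerivWithinAt_Ioi (γ : ℝ → ℝ) (hconv : ConvexOn ℝ (Set.Ici 0) γ) {x : ℝ}
    (hx : 0 ≤ x) (hbdd : BddBelow (slope γ x '' Set.Ioi x)) :
    HasDerivWithinAt γ (sInf (slope γ x '' Set.Ioi x)) (Set.Ioi x) x := by
  have hm : MonotoneOn (slope γ x) (Set.Ioi x) := by
    refine (hconv.slope_mono hx).mono ?_
    intro y hy
    rw [Set.mem_Ioi] at hy
    exact aux_mem_diff (hx.trans hy.le) (ne_of_gt hy)
  have ht := hm.tendsto_nhdsGT hbdd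
  exact (hasDerivWithinAt_iff_tendsto_slope' notMem_Ioi_self).mpr ht

theorem stmt_8 (γ : ℝ → ℝ) (hmono : StrictMonoOn γ (Set.Ici 0))
    (hconv : ConvexOn ℝ (Set.Ici 0) γ) (hγ0 : γ 0 = 0)
    (hnonneg : ∀ u, 0 ≤ u → 0 ≤ γ u)
    (hder0 : derivWithin γ (Set.Ioi 0) 0 = 0)
    (C : ℝ) (hC : 0 < C)
    (hsub : ∀ u v : ℝ, 0 ≤ u → 0 ≤ v → γ (u + v) ≤ C * (γ u + γ v)) :
    ∃ r : ℝ, IsLUB {q : ℝ | ∃ x : ℝ, 0 < x ∧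
        q = x * derivWithin γ (Set.Ioi x) x / γ x} r ∧ 1 < r := by
  have hpos : ∀ x : ℝ, 0 < x → 0 < γ x := by
    intro x hx
    have := hmono (le_refl (0:ℝ)) (le_of_lt hx) hx
    rwa [hγ0] at this
  have hslope_mono : ∀ x : ℝ, 0 ≤ x → MonotoneOn (slope γ x) (Set.Ici 0 \ {x}) :=
    fun x hx => hconv.slope_mono hx
  -- key bounds for every x > 0
  have key : ∀ x : ℝ, 0 < x →
      γ x / x ≤ derivWithin γ (Set.Ioi x) x ∧
      derivWithin γ (Set.Ioi x) x ≤ (2 * C - 1) * (γ x / x) := by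
    intro x hx
    have h0mem : (0:ℝ) ∈ Set.Ici (0:ℝ) \ {x} := aux_mem_diff (le_refl 0) (ne_of_lt hx)
    have hlow : ∀ y ∈ Set.Ioi x, slope γ x 0 ≤ slope γ x y := by
      intro y hy
      rw [Set.mem_Ioi] at hy
      have hymem := aux_mem_diff (c := x) (le_of_lt (hx.trans hy)) (ne_of_gt hy)
      exact hslope_mono x (le_of_lt hx) h0mem hymem (le_of_lt (hx.trans hy))
    have hbdd : BddBelow (slope γ x '' Set.Ioi x) := by
      refine ⟨slope γ x 0, ?_⟩
      rintro q ⟨y, hy, rfl⟩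
      exact hlow y hy
    have hD := aux_hasDerivWithinAt_Ioi γ hconv (le_of_lt hx) hbdd
    have hDW : derivWithin γ (Set.Ioi x) x = sInf (slope γ x '' Set.Ioi x) :=
      hD.derivWithin (uniqueDiffWithinAt_Ioi x)
    constructor
    · rw [hDW]
      have h1 : slope γ x 0 ≤ sInf (slope γ x '' Set.Ioi x) := by
        apply le_csInf
          ⟨slope γ x (x+1), Set.mem_image_of_mem _ (by rw [Set.mem_Ioi]; linarith)⟩
        rintro q ⟨y, hy, rfl⟩
        exact hlow y hy
      refine le_trans ?_ h1
      rw [slope_comm, slope_def_field, hγ0]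
      simp
    · rw [hDW]
      have h2x : (2:ℝ) * x ∈ Set.Ioi x := by rw [Set.mem_Ioi]; linarith
      have hle : sInf (slope γ x '' Set.Ioi x) ≤ slope γ x (2*x) :=
        csInf_le hbdd (Set.mem_image_of_mem _ h2x)
      refine hle.trans ?_
      have hsub2 : γ (2*x) ≤ 2 * C * γ x := by
        have h := hsub x x (le_of_lt hx) (le_of_lt hx)
        calc γ (2*x) = γ (x + x) := by ring_nf
          _ ≤ C * (γ x + γ x) := h
          _ = 2 * C * γ x := by ring
      rw [slope_def_field]
      have heq1 : (2:ℝ)*x - x = x := by ring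
      rw [heq1, div_le_iff₀ hx]
      have heq2 : (2*C-1)*(γ x / x)*x = 2*C*γ x - γ x := by
        field_simp
      rw [heq2]
      linarith
  set Q := {q : ℝ | ∃ x : ℝ, 0 < x ∧ q = x * derivWithin γ (Set.Ioi x) x / γ x} with hQdef
  have hQne : Q.Nonempty := ⟨1 * derivWithin γ (Set.Ioi 1) 1 / γ 1, 1, one_pos, rfl⟩
  have hQub : ∀ q ∈ Q, q ≤ 2 * C - 1 := by
    rintro q ⟨x, hx, rfl⟩
    have hk := (key x hx).2
    have hγx := hpos x hx
    rw [div_le_iff₀ hγx]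
    calc x * derivWithin γ (Set.Ioi x) x ≤ x * ((2 * C - 1) * (γ x / x)) := by
          exact mul_le_mul_of_nonneg_left hk (le_of_lt hx)
      _ = (2 * C - 1) * γ x := by field_simp
  have hQlb : ∀ q ∈ Q, 1 ≤ q := by
    rintro q ⟨x, hx, rfl⟩
    have hk := (key x hx).1
    have hγx := hpos x hx
    rw [le_div_iff₀ hγx, one_mul]
    calc γ x = x * (γ x / x) := by field_simp
      _ ≤ x * derivWithin γ (Set.Ioi x) x := by
          exact mul_le_mul_of_nonneg_left hk (le_of_lt hx)
  have hbddQ : BddAbove Q := ⟨2 * C - 1, hQub⟩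
  refine ⟨sSup Q, isLUB_csSup hQne hbddQ, ?_⟩
  by_contra hle
  push_neg at hle
  have hall : ∀ x : ℝ, 0 < x → derivWithin γ (Set.Ioi x) x = γ x / x := by
    intro x hx
    have hq : x * derivWithin γ (Set.Ioi x) x / γ x ∈ Q := ⟨x, hx, rfl⟩
    have h1 : x * derivWithin γ (Set.Ioi x) x / γ x ≤ 1 :=
      le_trans (le_csSup hbddQ hq) hle
    have h2 := hQlb _ hq
    have heq : x * derivWithin γ (Set.Ioi x) x / γ x = 1 := le_antisymm h1 h2
    have hγx := hpos x hx
    field_simp at heq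
    rw [eq_div_iff (ne_of_gt hx)]
    linarith
  -- slope γ x y ≤ D y = γ y / y for 0 < x < y gives antitonicity of γ x / x
  have hanti : ∀ x y : ℝ, 0 < x → x < y → γ y / y ≤ γ x / x := by
    intro x y hx hxy
    have hy : 0 < y := hx.trans hxy
    have hxmem : x ∈ Set.Ici (0:ℝ) \ {y} := aux_mem_diff (le_of_lt hx) (ne_of_lt hxy)
    have hlow : ∀ z ∈ Set.Ioi y, slope γ y x ≤ slope γ y z := by
      intro z hz
      rw [Set.mem_Ioi] at hz
      have hzmem := aux_mem_diff (c := y) (le_of_lt (hy.trans hz)) (ne_of_gt hz)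
      exact hslope_mono y (le_of_lt hy) hxmem hzmem (le_of_lt (hxy.trans hz))
    have hbdd : BddBelow (slope γ y '' Set.Ioi y) := by
      have h0mem : (0:ℝ) ∈ Set.Ici (0:ℝ) \ {y} := aux_mem_diff (le_refl 0) (ne_of_lt hy)
      refine ⟨slope γ y 0, ?_⟩
      rintro q ⟨z, hz, rfl⟩
      rw [Set.mem_Ioi] at hz
      have hzmem := aux_mem_diff (c := y) (le_of_lt (hy.trans hz)) (ne_of_gt hz)
      exact hslope_mono y (le_of_lt hy) h0mem hzmem (le_of_lt (hy.trans hz))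
    have hD := aux_hasDerivWithinAt_Ioi γ hconv (le_of_lt hy) hbdd
    have hDW : derivWithin γ (Set.Ioi y) y = sInf (slope γ y '' Set.Ioi y) :=
      hD.derivWithin (uniqueDiffWithinAt_Ioi y)
    have hsl : slope γ y x ≤ derivWithin γ (Set.Ioi y) y := by
      rw [hDW]
      apply le_csInf
        ⟨slope γ y (y+1), Set.mem_image_of_mem _ (by rw [Set.mem_Ioi]; linarith)⟩
      rintro q ⟨z, hz, rfl⟩
      exact hlow z hz
    rw [hall y hy, slope_comm, slope_def_field] at hsl
    -- hsl : (γ y - γ x) / (y - x) ≤ γ y / y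
    rw [div_le_div_iff₀ (by linarith : (0:ℝ) < y - x) hy] at hsl
    rw [div_le_div_iff₀ hy hx]
    nlinarith [hsl]
  have hmono2 : ∀ x y : ℝ, 0 < x → x < y → γ x / x ≤ γ y / y := by
    intro x y hx hxy
    have hy : 0 < y := hx.trans hxy
    have hxmem : x ∈ Set.Ici (0:ℝ) \ {(0:ℝ)} := aux_mem_diff (le_of_lt hx) (ne_of_gt hx)
    have hymem : y ∈ Set.Ici (0:ℝ) \ {(0:ℝ)} := aux_mem_diff (le_of_lt hy) (ne_of_gt hy)
    have h := hslope_mono 0 (le_refl 0) hxmem hymem (le_of_lt hxy)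
    rwa [slope_def_field, slope_def_field, hγ0, sub_zero, sub_zero, sub_zero, sub_zero] at h
  have hconst : ∀ x : ℝ, 0 < x → γ x / x = γ 1 := by
    intro x hx
    rcases lt_trichotomy x 1 with h | h | h
    · have h1 := hanti x 1 hx h
      have h2 := hmono2 x 1 hx h
      simpa using le_antisymm h2 h1
    · simp [h]
    · have h1 := hanti 1 x one_pos h
      have h2 := hmono2 1 x one_pos h
      simpa using le_antisymm h1 h2
  have hslope0 : ∀ y ∈ Set.Ioi (0:ℝ), slope γ 0 y = γ 1 := by
    intro y hy
    rw [Set.mem_Ioi] at hy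
    rw [slope_def_field, hγ0, sub_zero, sub_zero]
    exact hconst y hy
  have htend : Filter.Tendsto (slope γ 0) (nhdsWithin 0 (Set.Ioi 0)) (nhds (γ 1)) := by
    apply Filter.Tendsto.congr' _ tendsto_const_nhds
    filter_upwards [self_mem_nhdsWithin] with y hy
    exact (hslope0 y hy).symm
  have hD0 : HasDerivWithinAt γ (γ 1) (Set.Ioi 0) 0 :=
    (hasDerivWithinAt_iff_tendsto_slope' notMem_Ioi_self).mpr htend
  have hfin : derivWithin γ (Set.Ioi 0) 0 = γ 1 := hD0.derivWithin (uniqueDiffWithinAt_Ioi 0)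
  rw [hder0] at hfin
  exact absurd hfin.symm (ne_of_gt (hpos 1 one_pos))
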